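/- Define the Plücker coordinates of a matrix g = [[a,b,c],[d,e,f],[g,h,i]] in SL(3,ℝ) by A₁ = −g, B₁ = −h, C₁ = −i, A₂ = −(dh−eg), B₂ = di−fg, C₂ = −(ei−fh). Let N ≤ SL(3,ℝ) be the subgroup of upper triangular matrices with 1's on the diagonal. Then the assignment g ↦ (A₁,B₁,C₁,A₂,B₂,C₂) induces a bijection between the coset space N\SL(3,ℝ) and the set of tuples (A₁,B₁,C₁,A₂,B₂,C₂) ∈ ℝ⁶ satisfying A₁C₂ + B₁B₂ + C₁A₂ = 0 with (A₁,B₁,C₁) ≠ (0,0,0) and (A₂,B₂,C₂) ≠ (0,0,0). Moreover, a coset Ng contains an element of SL(3,ℤ) if and only if A₁, B₁, C₁ are integers with gcd(A₁,B₁,C₁) = 1 and A₂, B₂, C₂ are integers with gcd(A₂,B₂,C₂) = 1. -/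

import Mathlib

/-- The Plücker coordinates `(A₁, B₁, C₁, A₂, B₂, C₂)` of a 3×3 real matrix. -/
def pluckerM (g : Matrix (Fin 3) (Fin 3) ℝ) : Fin 6 → ℝ :=
  ![-(g 2 0), -(g 2 1), -(g 2 2),
    -(g 1 0 * g 2 1 - g 1 1 * g 2 0),
    g 1 0 * g 2 2 - g 1 2 * g 2 0,
    -(g 1 1 * g 2 2 - g 1 2 * g 2 1)]

/-- Membership in the subgroup `N` of upper unitriangular matrices. -/
def isUniUpper (n : Matrix (Fin 3) (Fin 3) ℝ) : Prop :=
  n 0 0 = 1 ∧ n 1 1 = 1 ∧ n 2 2 = 1 ∧ n 1 0 = 0 ∧ n 2 0 = 0 ∧ n 2 1 = 0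

open Matrix

abbrev SL3R := Matrix.SpecialLinearGroup (Fin 3) ℝ
abbrev SL3Z := Matrix.SpecialLinearGroup (Fin 3) ℤ

lemma coset_iff (g h : SL3R) :
    (∃ n : SL3R, isUniUpper (n : Matrix (Fin 3) (Fin 3) ℝ) ∧ n * g = h) ↔
      pluckerM (g : Matrix (Fin 3) (Fin 3) ℝ) = pluckerM (h : Matrix (Fin 3) (Fin 3) ℝ) := by
  constructor
  · rintro ⟨n, ⟨hn00, hn11, hn22, hn10, hn20, hn21⟩, rfl⟩
    have hm : ((n * g : SL3R) : Matrix (Fin 3) (Fin 3) ℝ) = (n : Matrix (Fin 3) (Fin 3) ℝ) * g :=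
      Matrix.SpecialLinearGroup.coe_mul n g
    have E : ∀ i j : Fin 3, ((n * g : SL3R) : Matrix (Fin 3) (Fin 3) ℝ) i j =
        n.1 i 0 * g.1 0 j + n.1 i 1 * g.1 1 j + n.1 i 2 * g.1 2 j := by
      intro i j
      rw [hm, Matrix.mul_apply, Fin.sum_univ_three]
    have e20 := E 2 0; have e21 := E 2 1; have e22 := E 2 2
    have e10 := E 1 0; have e11 := E 1 1; have e12 := E 1 2
    rw [hn20, hn21, hn22] at e20 e21 e22
    rw [hn10, hn11] at e10 e11 e12
    funext i
    fin_cases i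
    · show -(g.1 2 0) = -(((n*g : SL3R)).1 2 0); rw [e20]; ring
    · show -(g.1 2 1) = -(((n*g : SL3R)).1 2 1); rw [e21]; ring
    · show -(g.1 2 2) = -(((n*g : SL3R)).1 2 2); rw [e22]; ring
    · show -(g.1 1 0 * g.1 2 1 - g.1 1 1 * g.1 2 0) =
        -(((n*g:SL3R)).1 1 0 * ((n*g:SL3R)).1 2 1 - ((n*g:SL3R)).1 1 1 * ((n*g:SL3R)).1 2 0)
      rw [e10, e11, e20, e21]; ring
    · show (g.1 1 0 * g.1 2 2 - g.1 1 2 * g.1 2 0) =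
        (((n*g:SL3R)).1 1 0 * ((n*g:SL3R)).1 2 2 - ((n*g:SL3R)).1 1 2 * ((n*g:SL3R)).1 2 0)
      rw [e10, e12, e20, e22]; ring
    · show -(g.1 1 1 * g.1 2 2 - g.1 1 2 * g.1 2 1) =
        -(((n*g:SL3R)).1 1 1 * ((n*g:SL3R)).1 2 2 - ((n*g:SL3R)).1 1 2 * ((n*g:SL3R)).1 2 1)
      rw [e11, e12, e21, e22]; ring
  · intro hp
    have p0 : -(g.1 2 0) = -(h.1 2 0) := congrFun hp 0
    have p1 : -(g.1 2 1) = -(h.1 2 1) := congrFun hp 1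
    have p2 : -(g.1 2 2) = -(h.1 2 2) := congrFun hp 2
    have p3 : -(g.1 1 0 * g.1 2 1 - g.1 1 1 * g.1 2 0) =
        -(h.1 1 0 * h.1 2 1 - h.1 1 1 * h.1 2 0) := congrFun hp 3
    have p4 : (g.1 1 0 * g.1 2 2 - g.1 1 2 * g.1 2 0) =
        (h.1 1 0 * h.1 2 2 - h.1 1 2 * h.1 2 0) := congrFun hp 4
    have p5 : -(g.1 1 1 * g.1 2 2 - g.1 1 2 * g.1 2 1) =
        -(h.1 1 1 * h.1 2 2 - h.1 1 2 * h.1 2 1) := congrFun hp 5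
    have q0 : h.1 2 0 = g.1 2 0 := by linarith
    have q1 : h.1 2 1 = g.1 2 1 := by linarith
    have q2 : h.1 2 2 = g.1 2 2 := by linarith
    rw [q0, q1] at p3
    rw [q0, q2] at p4
    rw [q1, q2] at p5
    -- det of g
    have hdg := g.2
    rw [Matrix.det_fin_three] at hdg
    -- find t
    obtain ⟨t, ht0, ht1, ht2⟩ : ∃ t : ℝ, h.1 1 0 = g.1 1 0 + t * g.1 2 0 ∧
        h.1 1 1 = g.1 1 1 + t * g.1 2 1 ∧ h.1 1 2 = g.1 1 2 + t * g.1 2 2 := by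
      by_cases hz0 : g.1 2 0 ≠ 0
      · refine ⟨(h.1 1 0 - g.1 1 0) / g.1 2 0, by field_simp; ring, ?_, ?_⟩
        · field_simp
          linear_combination -p3
        · field_simp
          linear_combination p4
      · push_neg at hz0
        by_cases hz1 : g.1 2 1 ≠ 0
        · refine ⟨(h.1 1 1 - g.1 1 1) / g.1 2 1, ?_, by field_simp; ring, ?_⟩
          · field_simp
            linear_combination p3
          · field_simp
            linear_combination -p5
        · push_neg at hz1
          have hz2 : g.1 2 2 ≠ 0 := by
            intro hz2
            rw [hz0, hz1, hz2] at hdg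
            norm_num at hdg
          refine ⟨(h.1 1 2 - g.1 1 2) / g.1 2 2, ?_, ?_, by field_simp; ring⟩
          · field_simp
            linear_combination -p4
          · field_simp
            linear_combination p5
    refine ⟨h * g⁻¹, ?_, by group⟩
    set G' : Matrix (Fin 3) (Fin 3) ℝ := ((g⁻¹ : SL3R) : Matrix (Fin 3) (Fin 3) ℝ) with hG'
    have hgg : (g : Matrix (Fin 3) (Fin 3) ℝ) * G' = 1 := by
      rw [hG', ← Matrix.SpecialLinearGroup.coe_mul, mul_inv_cancel]
      rfl
    have U : ∀ i j : Fin 3, g.1 i 0 * G' 0 j + g.1 i 1 * G' 1 j + g.1 i 2 * G' 2 j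
        = (1 : Matrix (Fin 3) (Fin 3) ℝ) i j := by
      intro i j
      rw [← hgg, Matrix.mul_apply, Fin.sum_univ_three]
    have EN : ∀ i j : Fin 3, ((h * g⁻¹ : SL3R) : Matrix (Fin 3) (Fin 3) ℝ) i j =
        h.1 i 0 * G' 0 j + h.1 i 1 * G' 1 j + h.1 i 2 * G' 2 j := by
      intro i j
      rw [Matrix.SpecialLinearGroup.coe_mul, Matrix.mul_apply, Fin.sum_univ_three, hG']
    have u10 := U 1 0; have u11 := U 1 1; have u20 := U 2 0
    have u21 := U 2 1; have u22 := U 2 2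
    simp [Matrix.one_apply] at u10 u11 u20 u21 u22
    have n20 : ((h * g⁻¹ : SL3R)).1 2 0 = 0 := by
      rw [EN 2 0, q0, q1, q2]; linarith [u20]
    have n21 : ((h * g⁻¹ : SL3R)).1 2 1 = 0 := by
      rw [EN 2 1, q0, q1, q2]; linarith [u21]
    have n22 : ((h * g⁻¹ : SL3R)).1 2 2 = 1 := by
      rw [EN 2 2, q0, q1, q2]; linarith [u22]
    have n10 : ((h * g⁻¹ : SL3R)).1 1 0 = 0 := by
      rw [EN 1 0, ht0, ht1, ht2]
      linear_combination u10 + t * u20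
    have n11 : ((h * g⁻¹ : SL3R)).1 1 1 = 1 := by
      rw [EN 1 1, ht0, ht1, ht2]
      linear_combination u11 + t * u21
    have hdn := (h * g⁻¹ : SL3R).2
    rw [Matrix.det_fin_three] at hdn
    rw [n10, n11, n20, n21, n22] at hdn
    have n00 : ((h * g⁻¹ : SL3R)).1 0 0 = 1 := by linear_combination hdn
    exact ⟨n00, n11, n22, n10, n20, n21⟩

lemma part2 (v : Fin 6 → ℝ) :
    (v 0 * v 5 + v 1 * v 4 + v 2 * v 3 = 0 ∧
      ¬(v 0 = 0 ∧ v 1 = 0 ∧ v 2 = 0) ∧ ¬(v 3 = 0 ∧ v 4 = 0 ∧ v 5 = 0)) ↔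
      ∃ g : SL3R, pluckerM (g : Matrix (Fin 3) (Fin 3) ℝ) = v := by
  constructor
  · rintro ⟨hrel, hnz1, hnz2⟩
    set s : ℝ := v 0 ^ 2 + v 1 ^ 2 + v 2 ^ 2 with hs_def
    set q : ℝ := v 3 ^ 2 + v 4 ^ 2 + v 5 ^ 2 with hq_def
    have hs : s ≠ 0 := by
      intro h
      exact hnz1 ⟨by nlinarith [sq_nonneg (v 0), sq_nonneg (v 1), sq_nonneg (v 2)],
        by nlinarith [sq_nonneg (v 0), sq_nonneg (v 1), sq_nonneg (v 2)],
        by nlinarith [sq_nonneg (v 0), sq_nonneg (v 1), sq_nonneg (v 2)]⟩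
    have hq : q ≠ 0 := by
      intro h
      exact hnz2 ⟨by nlinarith [sq_nonneg (v 3), sq_nonneg (v 4), sq_nonneg (v 5)],
        by nlinarith [sq_nonneg (v 3), sq_nonneg (v 4), sq_nonneg (v 5)],
        by nlinarith [sq_nonneg (v 3), sq_nonneg (v 4), sq_nonneg (v 5)]⟩
    set M : Matrix (Fin 3) (Fin 3) ℝ :=
      !![-(v 5)/q, -(v 4)/q, -(v 3)/q;
         (v 1 * v 3 - v 2 * v 4)/s, (v 2 * v 5 - v 0 * v 3)/s, (v 0 * v 4 - v 1 * v 5)/s;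
         -(v 0), -(v 1), -(v 2)] with hM
    have hdet : M.det = 1 := by
      rw [hM]
      simp only [Matrix.det_fin_three]
      norm_num [Matrix.cons_val', Matrix.cons_val_zero, Matrix.cons_val_one, Matrix.head_cons, Matrix.cons_val_two, Matrix.tail_cons]
      field_simp
      linear_combination (-(v 0 * v 5 + v 1 * v 4 + v 2 * v 3)) * hrel
    refine ⟨⟨M, hdet⟩, ?_⟩
    funext i
    fin_cases i
    · show -(M 2 0) = v 0
      show -(-(v 0)) = v 0; ring
    · show -(-(v 1)) = v 1; ring
    · show -(-(v 2)) = v 2; ring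
    · show -((v 1 * v 3 - v 2 * v 4)/s * -(v 1) - (v 2 * v 5 - v 0 * v 3)/s * -(v 0)) = v 3
      field_simp
      linear_combination (-(v 2)) * hrel
    · show (v 1 * v 3 - v 2 * v 4)/s * -(v 2) - (v 0 * v 4 - v 1 * v 5)/s * -(v 0) = v 4
      field_simp
      linear_combination (-(v 1)) * hrel
    · show -((v 2 * v 5 - v 0 * v 3)/s * -(v 2) - (v 0 * v 4 - v 1 * v 5)/s * -(v 1)) = v 5
      field_simp
      linear_combination (-(v 0)) * hrel
  · rintro ⟨g, rfl⟩
    have hdg := g.2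
    rw [Matrix.det_fin_three] at hdg
    refine ⟨by show -(g.1 2 0) * -(g.1 1 1 * g.1 2 2 - g.1 1 2 * g.1 2 1) +
        -(g.1 2 1) * (g.1 1 0 * g.1 2 2 - g.1 1 2 * g.1 2 0) +
        -(g.1 2 2) * -(g.1 1 0 * g.1 2 1 - g.1 1 1 * g.1 2 0) = 0; ring, ?_, ?_⟩
    · rintro ⟨h0, h1, h2⟩
      have e0 : -(g.1 2 0) = 0 := h0
      have e1 : -(g.1 2 1) = 0 := h1
      have e2 : -(g.1 2 2) = 0 := h2
      rw [show g.1 2 0 = 0 by linarith, show g.1 2 1 = 0 by linarith,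
        show g.1 2 2 = 0 by linarith] at hdg
      norm_num at hdg
    · rintro ⟨h3, h4, h5⟩
      have e3 : -(g.1 1 0 * g.1 2 1 - g.1 1 1 * g.1 2 0) = 0 := h3
      have e4 : (g.1 1 0 * g.1 2 2 - g.1 1 2 * g.1 2 0) = 0 := h4
      have e5 : -(g.1 1 1 * g.1 2 2 - g.1 1 2 * g.1 2 1) = 0 := h5
      have : (1:ℝ) = 0 := by
        linear_combination -hdg - g.1 0 0 * e5 - g.1 0 1 * e4 - g.1 0 2 * e3
      norm_num at this

lemma bezout3 (a b c : ℤ) (h : Int.gcd a (Int.gcd b c) = 1) :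
    ∃ x y z : ℤ, a * x + b * y + c * z = 1 := by
  have e1 : (Int.gcd b c : ℤ) = b * Int.gcdA b c + c * Int.gcdB b c := Int.gcd_eq_gcd_ab b c
  have e2 := Int.gcd_eq_gcd_ab a (Int.gcd b c : ℤ)
  rw [h] at e2
  refine ⟨Int.gcdA a (Int.gcd b c : ℤ),
    Int.gcdA b c * Int.gcdB a (Int.gcd b c : ℤ),
    Int.gcdB b c * Int.gcdB a (Int.gcd b c : ℤ), ?_⟩
  push_cast at e2
  linear_combination -e2 - Int.gcdB a (Int.gcd b c : ℤ) * e1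

lemma part3 (g : SL3R) :
    (∃ γ : SL3Z, ∃ n : SL3R, isUniUpper (n : Matrix (Fin 3) (Fin 3) ℝ) ∧
        n * g = Matrix.SpecialLinearGroup.map (Int.castRingHom ℝ) γ) ↔
      (∃ a₁ b₁ c₁ a₂ b₂ c₂ : ℤ,
        pluckerM (g : Matrix (Fin 3) (Fin 3) ℝ) = ![(a₁ : ℝ), b₁, c₁, a₂, b₂, c₂] ∧
        Int.gcd a₁ (Int.gcd b₁ c₁) = 1 ∧ Int.gcd a₂ (Int.gcd b₂ c₂) = 1) := by
  constructor
  · rintro ⟨γ, n, hn, hng⟩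
    have hpl := (coset_iff g (Matrix.SpecialLinearGroup.map (Int.castRingHom ℝ) γ)).mp ⟨n, hn, hng⟩
    set Γ : Matrix (Fin 3) (Fin 3) ℤ := (γ : Matrix (Fin 3) (Fin 3) ℤ) with hΓ
    have hdγ := γ.2
    rw [Matrix.det_fin_three] at hdγ
    refine ⟨-(Γ 2 0), -(Γ 2 1), -(Γ 2 2), -(Γ 1 0 * Γ 2 1 - Γ 1 1 * Γ 2 0),
      Γ 1 0 * Γ 2 2 - Γ 1 2 * Γ 2 0, -(Γ 1 1 * Γ 2 2 - Γ 1 2 * Γ 2 1), ?_, ?_, ?_⟩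
    · rw [hpl]
      have E : ∀ i j : Fin 3, ((Matrix.SpecialLinearGroup.map (Int.castRingHom ℝ) γ :
          SL3R) : Matrix (Fin 3) (Fin 3) ℝ) i j = ((Γ i j : ℤ) : ℝ) := fun i j => rfl
      funext i
      fin_cases i
      · show -(((Matrix.SpecialLinearGroup.map (Int.castRingHom ℝ) γ : SL3R) :
          Matrix (Fin 3) (Fin 3) ℝ) 2 0) = ((-(Γ 2 0) : ℤ) : ℝ)
        rw [E]; push_cast; ring
      · show -(((Matrix.SpecialLinearGroup.map (Int.castRingHom ℝ) γ : SL3R) :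
          Matrix (Fin 3) (Fin 3) ℝ) 2 1) = ((-(Γ 2 1) : ℤ) : ℝ)
        rw [E]; push_cast; ring
      · show -(((Matrix.SpecialLinearGroup.map (Int.castRingHom ℝ) γ : SL3R) :
          Matrix (Fin 3) (Fin 3) ℝ) 2 2) = ((-(Γ 2 2) : ℤ) : ℝ)
        rw [E]; push_cast; ring
      · show -(((Matrix.SpecialLinearGroup.map (Int.castRingHom ℝ) γ : SL3R) :
            Matrix (Fin 3) (Fin 3) ℝ) 1 0 *
            ((Matrix.SpecialLinearGroup.map (Int.castRingHom ℝ) γ : SL3R) :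
            Matrix (Fin 3) (Fin 3) ℝ) 2 1 -
            ((Matrix.SpecialLinearGroup.map (Int.castRingHom ℝ) γ : SL3R) :
            Matrix (Fin 3) (Fin 3) ℝ) 1 1 *
            ((Matrix.SpecialLinearGroup.map (Int.castRingHom ℝ) γ : SL3R) :
            Matrix (Fin 3) (Fin 3) ℝ) 2 0) = ((-(Γ 1 0 * Γ 2 1 - Γ 1 1 * Γ 2 0) : ℤ) : ℝ)
        rw [E, E, E, E]; push_cast; ring
      · show (((Matrix.SpecialLinearGroup.map (Int.castRingHom ℝ) γ : SL3R) :
            Matrix (Fin 3) (Fin 3) ℝ) 1 0 *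
            ((Matrix.SpecialLinearGroup.map (Int.castRingHom ℝ) γ : SL3R) :
            Matrix (Fin 3) (Fin 3) ℝ) 2 2 -
            ((Matrix.SpecialLinearGroup.map (Int.castRingHom ℝ) γ : SL3R) :
            Matrix (Fin 3) (Fin 3) ℝ) 1 2 *
            ((Matrix.SpecialLinearGroup.map (Int.castRingHom ℝ) γ : SL3R) :
            Matrix (Fin 3) (Fin 3) ℝ) 2 0) = ((Γ 1 0 * Γ 2 2 - Γ 1 2 * Γ 2 0 : ℤ) : ℝ)
        rw [E, E, E, E]; push_cast; ring
      · show -(((Matrix.SpecialLinearGroup.map (Int.castRingHom ℝ) γ : SL3R) :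
            Matrix (Fin 3) (Fin 3) ℝ) 1 1 *
            ((Matrix.SpecialLinearGroup.map (Int.castRingHom ℝ) γ : SL3R) :
            Matrix (Fin 3) (Fin 3) ℝ) 2 2 -
            ((Matrix.SpecialLinearGroup.map (Int.castRingHom ℝ) γ : SL3R) :
            Matrix (Fin 3) (Fin 3) ℝ) 1 2 *
            ((Matrix.SpecialLinearGroup.map (Int.castRingHom ℝ) γ : SL3R) :
            Matrix (Fin 3) (Fin 3) ℝ) 2 1) = ((-(Γ 1 1 * Γ 2 2 - Γ 1 2 * Γ 2 1) : ℤ) : ℝ)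
        rw [E, E, E, E]; push_cast; ring
    · -- gcd of bottom row
      have key : (-(Γ 2 0)) * (-(Γ 0 1 * Γ 1 2 - Γ 0 2 * Γ 1 1)) +
          (-(Γ 2 1)) * (Γ 0 0 * Γ 1 2 - Γ 0 2 * Γ 1 0) +
          (-(Γ 2 2)) * (-(Γ 0 0 * Γ 1 1 - Γ 0 1 * Γ 1 0)) = 1 := by
        linear_combination hdγ
      set d : ℕ := Int.gcd (-(Γ 2 0)) (Int.gcd (-(Γ 2 1)) (-(Γ 2 2))) with hd
      have h1 : (d:ℤ) ∣ -(Γ 2 0) := Int.gcd_dvd_left _ _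
      have hg : (d:ℤ) ∣ (Int.gcd (-(Γ 2 1)) (-(Γ 2 2)) : ℤ) := Int.gcd_dvd_right _ _
      have h2 : (d:ℤ) ∣ -(Γ 2 1) := hg.trans (Int.gcd_dvd_left _ _)
      have h3 : (d:ℤ) ∣ -(Γ 2 2) := hg.trans (Int.gcd_dvd_right _ _)
      have : (d:ℤ) ∣ 1 := by
        rw [← key]
        exact dvd_add (dvd_add (h1.mul_right _) (h2.mul_right _)) (h3.mul_right _)
      exact Nat.dvd_one.mp (Int.ofNat_dvd.mp (by exact_mod_cast this))
    · have key : (-(Γ 1 0 * Γ 2 1 - Γ 1 1 * Γ 2 0)) * (-(Γ 0 2)) +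
          (Γ 1 0 * Γ 2 2 - Γ 1 2 * Γ 2 0) * (-(Γ 0 1)) +
          (-(Γ 1 1 * Γ 2 2 - Γ 1 2 * Γ 2 1)) * (-(Γ 0 0)) = 1 := by
        linear_combination hdγ
      set d : ℕ := Int.gcd (-(Γ 1 0 * Γ 2 1 - Γ 1 1 * Γ 2 0))
        (Int.gcd (Γ 1 0 * Γ 2 2 - Γ 1 2 * Γ 2 0) (-(Γ 1 1 * Γ 2 2 - Γ 1 2 * Γ 2 1))) with hd
      have h1 : (d:ℤ) ∣ _ := Int.gcd_dvd_left _ _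
      have hg : (d:ℤ) ∣ (Int.gcd (Γ 1 0 * Γ 2 2 - Γ 1 2 * Γ 2 0)
          (-(Γ 1 1 * Γ 2 2 - Γ 1 2 * Γ 2 1)) : ℤ) := Int.gcd_dvd_right _ _
      have h2 := hg.trans (Int.gcd_dvd_left (a := Γ 1 0 * Γ 2 2 - Γ 1 2 * Γ 2 0)
        (b := -(Γ 1 1 * Γ 2 2 - Γ 1 2 * Γ 2 1)))
      have h3 := hg.trans (Int.gcd_dvd_right (a := Γ 1 0 * Γ 2 2 - Γ 1 2 * Γ 2 0)
        (b := -(Γ 1 1 * Γ 2 2 - Γ 1 2 * Γ 2 1)))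
      have : (d:ℤ) ∣ 1 := by
        rw [← key]
        exact dvd_add (dvd_add (h1.mul_right _) (h2.mul_right _)) (h3.mul_right _)
      exact Nat.dvd_one.mp (Int.ofNat_dvd.mp (by exact_mod_cast this))
  · rintro ⟨a₁, b₁, c₁, a₂, b₂, c₂, hpl, hg1, hg2⟩
    have Q0 : ((a₁:ℝ)) = -(g.1 2 0) := (congrFun hpl 0).symm
    have Q1 : ((b₁:ℝ)) = -(g.1 2 1) := (congrFun hpl 1).symm
    have Q2 : ((c₁:ℝ)) = -(g.1 2 2) := (congrFun hpl 2).symm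
    have Q3 : ((a₂:ℝ)) = -(g.1 1 0 * g.1 2 1 - g.1 1 1 * g.1 2 0) := (congrFun hpl 3).symm
    have Q4 : ((b₂:ℝ)) = (g.1 1 0 * g.1 2 2 - g.1 1 2 * g.1 2 0) := (congrFun hpl 4).symm
    have Q5 : ((c₂:ℝ)) = -(g.1 1 1 * g.1 2 2 - g.1 1 2 * g.1 2 1) := (congrFun hpl 5).symm
    have hrelR : (a₁:ℝ) * c₂ + (b₁:ℝ) * b₂ + (c₁:ℝ) * a₂ = 0 := by
      rw [Q0, Q1, Q2, Q3, Q4, Q5]; ring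
    have hrelZ : a₁ * c₂ + b₁ * b₂ + c₁ * a₂ = 0 := by exact_mod_cast hrelR
    obtain ⟨x, y, z, hxyz⟩ := bezout3 a₁ b₁ c₁ hg1
    obtain ⟨p, q, r, hpqr⟩ := bezout3 a₂ b₂ c₂ hg2
    set Γ : Matrix (Fin 3) (Fin 3) ℤ :=
      !![-r, -q, -p;
         y * a₂ - z * b₂, z * c₂ - x * a₂, x * b₂ - y * c₂;
         -a₁, -b₁, -c₁] with hΓ
    have hdet : Γ.det = 1 := by
      rw [hΓ]
      simp only [Matrix.det_fin_three]
      norm_num [Matrix.cons_val', Matrix.cons_val_zero, Matrix.cons_val_one, Matrix.head_cons, Matrix.cons_val_two, Matrix.tail_cons]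
      linear_combination (a₂ * p + b₂ * q + c₂ * r) * hxyz + hpqr -
        (r * x + q * y + p * z) * hrelZ
    set γ : SL3Z := ⟨Γ, hdet⟩ with hγ
    have hxyzR : (a₁:ℝ) * x + (b₁:ℝ) * y + (c₁:ℝ) * z = 1 := by exact_mod_cast hxyz
    have hplγ : pluckerM ((Matrix.SpecialLinearGroup.map (Int.castRingHom ℝ) γ : SL3R) :
        Matrix (Fin 3) (Fin 3) ℝ) = ![(a₁ : ℝ), b₁, c₁, a₂, b₂, c₂] := by
      have E : ∀ i j : Fin 3, ((Matrix.SpecialLinearGroup.map (Int.castRingHom ℝ) γ :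
          SL3R) : Matrix (Fin 3) (Fin 3) ℝ) i j = ((Γ i j : ℤ) : ℝ) := fun i j => rfl
      have E20 : ((Γ 2 0 : ℤ) : ℝ) = ((-a₁ : ℤ) : ℝ) := by rw [hΓ]; norm_num [Matrix.cons_val_two, Matrix.tail_cons]
      have E21 : ((Γ 2 1 : ℤ) : ℝ) = ((-b₁ : ℤ) : ℝ) := by rw [hΓ]; norm_num [Matrix.cons_val_two, Matrix.tail_cons]
      have E22 : ((Γ 2 2 : ℤ) : ℝ) = ((-c₁ : ℤ) : ℝ) := by rw [hΓ]; norm_num [Matrix.cons_val_two, Matrix.tail_cons]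
      have E10 : ((Γ 1 0 : ℤ) : ℝ) = ((y * a₂ - z * b₂ : ℤ) : ℝ) := by rw [hΓ]; norm_num [Matrix.cons_val_two, Matrix.tail_cons]
      have E11 : ((Γ 1 1 : ℤ) : ℝ) = ((z * c₂ - x * a₂ : ℤ) : ℝ) := by rw [hΓ]; norm_num [Matrix.cons_val_two, Matrix.tail_cons]
      have E12 : ((Γ 1 2 : ℤ) : ℝ) = ((x * b₂ - y * c₂ : ℤ) : ℝ) := by rw [hΓ]; norm_num [Matrix.cons_val_two, Matrix.tail_cons]
      funext i
      fin_cases i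
      · show -(((Matrix.SpecialLinearGroup.map (Int.castRingHom ℝ) γ : SL3R) :
          Matrix (Fin 3) (Fin 3) ℝ) 2 0) = (a₁ : ℝ)
        rw [E, E20]; push_cast; ring
      · show -(((Matrix.SpecialLinearGroup.map (Int.castRingHom ℝ) γ : SL3R) :
          Matrix (Fin 3) (Fin 3) ℝ) 2 1) = (b₁ : ℝ)
        rw [E, E21]; push_cast; ring
      · show -(((Matrix.SpecialLinearGroup.map (Int.castRingHom ℝ) γ : SL3R) :
          Matrix (Fin 3) (Fin 3) ℝ) 2 2) = (c₁ : ℝ)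
        rw [E, E22]; push_cast; ring
      · show -(((Matrix.SpecialLinearGroup.map (Int.castRingHom ℝ) γ : SL3R) :
            Matrix (Fin 3) (Fin 3) ℝ) 1 0 *
            ((Matrix.SpecialLinearGroup.map (Int.castRingHom ℝ) γ : SL3R) :
            Matrix (Fin 3) (Fin 3) ℝ) 2 1 -
            ((Matrix.SpecialLinearGroup.map (Int.castRingHom ℝ) γ : SL3R) :
            Matrix (Fin 3) (Fin 3) ℝ) 1 1 *
            ((Matrix.SpecialLinearGroup.map (Int.castRingHom ℝ) γ : SL3R) :
            Matrix (Fin 3) (Fin 3) ℝ) 2 0) = (a₂ : ℝ)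
        rw [E, E, E, E, E10, E11, E20, E21]; push_cast
        linear_combination (a₂:ℝ) * hxyzR - (z:ℝ) * hrelR
      · show (((Matrix.SpecialLinearGroup.map (Int.castRingHom ℝ) γ : SL3R) :
            Matrix (Fin 3) (Fin 3) ℝ) 1 0 *
            ((Matrix.SpecialLinearGroup.map (Int.castRingHom ℝ) γ : SL3R) :
            Matrix (Fin 3) (Fin 3) ℝ) 2 2 -
            ((Matrix.SpecialLinearGroup.map (Int.castRingHom ℝ) γ : SL3R) :
            Matrix (Fin 3) (Fin 3) ℝ) 1 2 *
            ((Matrix.SpecialLinearGroup.map (Int.castRingHom ℝ) γ : SL3R) :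
            Matrix (Fin 3) (Fin 3) ℝ) 2 0) = (b₂ : ℝ)
        rw [E, E, E, E, E10, E12, E20, E22]; push_cast
        linear_combination (b₂:ℝ) * hxyzR - (y:ℝ) * hrelR
      · show -(((Matrix.SpecialLinearGroup.map (Int.castRingHom ℝ) γ : SL3R) :
            Matrix (Fin 3) (Fin 3) ℝ) 1 1 *
            ((Matrix.SpecialLinearGroup.map (Int.castRingHom ℝ) γ : SL3R) :
            Matrix (Fin 3) (Fin 3) ℝ) 2 2 -
            ((Matrix.SpecialLinearGroup.map (Int.castRingHom ℝ) γ : SL3R) :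
            Matrix (Fin 3) (Fin 3) ℝ) 1 2 *
            ((Matrix.SpecialLinearGroup.map (Int.castRingHom ℝ) γ : SL3R) :
            Matrix (Fin 3) (Fin 3) ℝ) 2 1) = (c₂ : ℝ)
        rw [E, E, E, E, E11, E12, E21, E22]; push_cast
        linear_combination (c₂:ℝ) * hxyzR - (x:ℝ) * hrelR
    obtain ⟨n, hn, hng⟩ := (coset_iff g
      (Matrix.SpecialLinearGroup.map (Int.castRingHom ℝ) γ)).mpr (by rw [hpl, hplγ])
    exact ⟨γ, n, hn, hng⟩

/-- The Plücker coordinates induce a bijection `N\\SL(3,ℝ) ↔ {(A₁,B₁,C₁,A₂,B₂,C₂) :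
A₁C₂ + B₁B₂ + C₁A₂ = 0, (A₁,B₁,C₁) ≠ 0, (A₂,B₂,C₂) ≠ 0}`, and a coset `Ng` contains
an element of `SL(3,ℤ)` iff the coordinates are integral with the two gcd conditions. -/
theorem plucker_coordinates_parametrize_cosets :
    (∀ g h : Matrix.SpecialLinearGroup (Fin 3) ℝ,
      (∃ n : Matrix.SpecialLinearGroup (Fin 3) ℝ,
          isUniUpper (n : Matrix (Fin 3) (Fin 3) ℝ) ∧ n * g = h) ↔
        pluckerM (g : Matrix (Fin 3) (Fin 3) ℝ) = pluckerM (h : Matrix (Fin 3) (Fin 3) ℝ)) ∧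
    (∀ v : Fin 6 → ℝ,
      (v 0 * v 5 + v 1 * v 4 + v 2 * v 3 = 0 ∧
        ¬(v 0 = 0 ∧ v 1 = 0 ∧ v 2 = 0) ∧ ¬(v 3 = 0 ∧ v 4 = 0 ∧ v 5 = 0)) ↔
        ∃ g : Matrix.SpecialLinearGroup (Fin 3) ℝ,
          pluckerM (g : Matrix (Fin 3) (Fin 3) ℝ) = v) ∧
    (∀ g : Matrix.SpecialLinearGroup (Fin 3) ℝ,
      (∃ γ : Matrix.SpecialLinearGroup (Fin 3) ℤ,
        ∃ n : Matrix.SpecialLinearGroup (Fin 3) ℝ,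
          isUniUpper (n : Matrix (Fin 3) (Fin 3) ℝ) ∧
            n * g = Matrix.SpecialLinearGroup.map (Int.castRingHom ℝ) γ) ↔
      (∃ a₁ b₁ c₁ a₂ b₂ c₂ : ℤ,
        pluckerM (g : Matrix (Fin 3) (Fin 3) ℝ) = ![(a₁ : ℝ), b₁, c₁, a₂, b₂, c₂] ∧
        Int.gcd a₁ (Int.gcd b₁ c₁) = 1 ∧ Int.gcd a₂ (Int.gcd b₂ c₂) = 1)) :=
  ⟨coset_iff, part2, part3⟩
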